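/- For all n ≥ 0, the number of permutations of [n] avoiding both generalized patterns 1-23 and 1-32 equals the number of involutions in S_n. -/

import Mathlib

/-- `π` contains an occurrence of the generalized pattern `1-23`:
indices `i < j` with `j + 1 ≤ n` and `π i < π j < π (j+1)`. -/
def Occ123 {n : ℕ} (π : Equiv.Perm (Fin n)) : Prop :=
  ∃ i j : Fin n, ∃ hj : (j : ℕ) + 1 < n,
    i < j ∧ π i < π j ∧ π j < π ⟨(j : ℕ) + 1, hj⟩

/-- `π` contains an occurrence of the generalized pattern `1-32`:
indices `i < j` with `j + 1 ≤ n` and `π i < π (j+1) < π j`. -/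
def Occ132' {n : ℕ} (π : Equiv.Perm (Fin n)) : Prop :=
  ∃ i j : Fin n, ∃ hj : (j : ℕ) + 1 < n,
    i < j ∧ π i < π ⟨(j : ℕ) + 1, hj⟩ ∧ π ⟨(j : ℕ) + 1, hj⟩ < π j

def Avoid {n : ℕ} {β : Type*} [LinearOrder β] (w : Fin n → β) : Prop :=
  ∀ (i j : Fin n) (hj : (j : ℕ) + 1 < n), i < j → min (w j) (w ⟨(j:ℕ)+1, hj⟩) < w i

theorem avoid_iff {n : ℕ} (π : Equiv.Perm (Fin n)) :
    (¬ Occ123 π ∧ ¬ Occ132' π) ↔ Avoid π := by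
  constructor
  · rintro ⟨h1, h2⟩ i j hj hij
    have hjj : π j ≠ π ⟨(j:ℕ)+1, hj⟩ := by
      intro h; have := π.injective h
      have := congrArg Fin.val this; simp at this
    have hij1 : π i ≠ π j := fun h => absurd (π.injective h) hij.ne
    have hij2 : π i ≠ π ⟨(j:ℕ)+1, hj⟩ := by
      intro h; have := congrArg Fin.val (π.injective h)
      have hlt : (i:ℕ) < j := hij; simp at this; omega
    by_contra hc
    push_neg at hc
    rcases lt_or_gt_of_ne hjj with h | h
    · exact h1 ⟨i, j, hj, hij, lt_of_le_of_ne (le_trans hc (min_le_left _ _)) hij1, h⟩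
    · exact h2 ⟨i, j, hj, hij, lt_of_le_of_ne (le_trans hc (min_le_right _ _)) hij2, h⟩
  · intro h
    constructor
    · rintro ⟨i, j, hj, hij, h1, h2⟩
      have := h i j hj hij
      rw [min_eq_left h2.le] at this
      exact absurd h1 (not_lt.2 this.le)
    · rintro ⟨i, j, hj, hij, h1, h2⟩
      have := h i j hj hij
      rw [min_eq_right h2.le] at this
      exact absurd h1 (not_lt.2 this.le)

theorem avoid_comp {n : ℕ} {β γ : Type*} [LinearOrder β] [LinearOrder γ]
    {g : β → γ} (hg : StrictMono g) (w : Fin n → β) :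
    Avoid (g ∘ w) ↔ Avoid w := by
  unfold Avoid
  refine forall_congr' fun i => forall_congr' fun j => forall_congr' fun hj =>
    imp_congr_right fun hij => ?_
  simp only [Function.comp_apply, ← hg.monotone.map_min, hg.lt_iff_lt]



theorem avoid_subtype_val {n N : ℕ} {p : Fin N → Prop} (w : Fin n → {x // p x}) :
    Avoid (fun j => (w j : Fin N)) ↔ Avoid w :=
  avoid_comp (fun _ _ h => h) w

noncomputable def stdEquiv {N n : ℕ} (s : Finset (Fin N)) (hs : s.card = n) :
    {w : Fin n ↪ Fin N // (∀ x, w x ∈ s) ∧ Avoid ⇑w} ≃ {π : Equiv.Perm (Fin n) // Avoid ⇑π} where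
  toFun w := by
    refine ⟨Equiv.ofBijective (fun j => (s.orderIsoOfFin hs).symm ⟨w.1 j, w.2.1 j⟩)
      (Finite.injective_iff_bijective.mp
        ((s.orderIsoOfFin hs).symm.injective.comp
          (fun a b h => w.1.injective (congrArg Subtype.val h)))), ?_⟩
    show Avoid (fun j => (s.orderIsoOfFin hs).symm ⟨w.1 j, w.2.1 j⟩)
    have h1 : (fun j => (s.orderIsoOfFin hs).symm ⟨w.1 j, w.2.1 j⟩)
        = ⇑(s.orderIsoOfFin hs).symm ∘ (fun j => (⟨w.1 j, w.2.1 j⟩ : {x // x ∈ s})) := rfl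
    rw [h1, avoid_comp (s.orderIsoOfFin hs).symm.strictMono,
      ← avoid_subtype_val (fun j => (⟨w.1 j, w.2.1 j⟩ : {x // x ∈ s}))]
    exact w.2.2
  invFun π :=
    ⟨⟨fun j => ((s.orderIsoOfFin hs) (π.1 j) : Fin N),
      fun a b h => π.1.injective ((s.orderIsoOfFin hs).injective (Subtype.ext h))⟩,
      fun j => ((s.orderIsoOfFin hs) (π.1 j)).2, by
      show Avoid (fun j => ((s.orderIsoOfFin hs) (π.1 j) : Fin N))
      rw [avoid_subtype_val (fun j => (s.orderIsoOfFin hs) (π.1 j))]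
      have h1 : (fun j => (s.orderIsoOfFin hs) (π.1 j)) = ⇑(s.orderIsoOfFin hs) ∘ ⇑π.1 := rfl
      rw [h1, avoid_comp (s.orderIsoOfFin hs).strictMono]
      exact π.2⟩
  left_inv w := by
    apply Subtype.ext; apply Function.Embedding.ext; intro j
    simp only [Function.Embedding.coeFn_mk, Equiv.ofBijective_apply]
    rw [show ((s.orderIsoOfFin hs) ((s.orderIsoOfFin hs).symm ⟨w.1 j, w.2.1 j⟩) : Fin N)
      = ((⟨w.1 j, w.2.1 j⟩ : {x // x ∈ s}) : Fin N) from congrArg _ ((s.orderIsoOfFin hs).apply_symm_apply _)]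
  right_inv π := by
    apply Subtype.ext; apply Equiv.ext; intro j
    simp only [Function.Embedding.coeFn_mk, Equiv.ofBijective_apply]
    have h2 : (⟨((s.orderIsoOfFin hs) (π.1 j) : Fin N), ((s.orderIsoOfFin hs) (π.1 j)).2⟩
        : {x // x ∈ s}) = (s.orderIsoOfFin hs) (π.1 j) := Subtype.ext rfl
    show (s.orderIsoOfFin hs).symm ⟨((s.orderIsoOfFin hs) (π.1 j) : Fin N), ((s.orderIsoOfFin hs) (π.1 j)).2⟩ = π.1 j
    rw [h2, OrderIso.symm_apply_apply]



noncomputable def tail1Equiv (n : ℕ) :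
    {π : Equiv.Perm (Fin (n+2)) // Avoid ⇑π ∧ π (Fin.last (n+1)) = 0} ≃
    {w : Fin (n+1) ↪ Fin (n+2) // (∀ x, w x ∈ (Finset.univ : Finset (Fin (n+2))).erase 0) ∧ Avoid ⇑w} where
  toFun π := by
    refine ⟨⟨fun j => π.1 ⟨(j:ℕ), by omega⟩, fun a b h => ?_⟩, fun j => ?_, ?_⟩
    · have := congrArg Fin.val (π.1.injective h)
      exact Fin.ext this
    · rw [Finset.mem_erase]
      refine ⟨fun h => ?_, Finset.mem_univ _⟩
      have : (⟨(j:ℕ), by omega⟩ : Fin (n+2)) = Fin.last (n+1) :=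
        π.1.injective ((h : π.1 _ = 0).trans π.2.2.symm)
      have := congrArg Fin.val this
      simp [Fin.last] at this
      omega
    · intro i j hj hij
      have hj' : ((⟨(j:ℕ), by omega⟩ : Fin (n+2)) : ℕ) + 1 < n + 2 := by
        show (j:ℕ) + 1 < n + 2; omega
      exact π.2.1 ⟨(i:ℕ), by omega⟩ ⟨(j:ℕ), by omega⟩ hj' hij
  invFun w := by
    have hne : ∀ j, w.1 j ≠ 0 := fun j => (Finset.mem_erase.mp (w.2.1 j)).1
    have hinj : Function.Injective
        (fun x : Fin (n+2) => if h : (x:ℕ) < n+1 then w.1 ⟨(x:ℕ), h⟩ else 0) := by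
      intro a b hab
      dsimp only at hab
      split_ifs at hab with h1 h2 h2
      · have hv := congrArg Fin.val (w.1.injective hab)
        exact Fin.ext hv
      · exact absurd hab (hne _)
      · exact absurd hab.symm (hne _)
      · exact Fin.ext (by omega)
    refine ⟨Equiv.ofBijective _ (Finite.injective_iff_bijective.mp hinj), ?_, ?_⟩
    · show Avoid (fun x : Fin (n+2) => if h : (x:ℕ) < n+1 then w.1 ⟨(x:ℕ), h⟩ else 0)
      intro i j hj hij
      have hij' : (i:ℕ) < (j:ℕ) := hij
      have hi : (i:ℕ) < n+1 := by omega
      by_cases hjn : (j:ℕ)+1 < n+1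
      · have key := w.2.2 ⟨(i:ℕ), by omega⟩ ⟨(j:ℕ), by omega⟩
          (show (j:ℕ)+1 < n+1 from hjn) hij
        simp only [dif_pos hi, dif_pos (show (j:ℕ) < n+1 by omega),
          dif_pos (show ((⟨(j:ℕ)+1, hj⟩ : Fin (n+2)):ℕ) < n+1 from hjn)]
        exact key
      · have hj1 : ¬ (((⟨(j:ℕ)+1, hj⟩ : Fin (n+2)):ℕ) < n+1) := hjn
        simp only [dif_pos hi, dif_neg hj1]
        rw [min_eq_right (Fin.zero_le _)]
        exact Fin.pos_iff_ne_zero.mpr (hne _)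
    · show (if h : ((Fin.last (n+1) : Fin (n+2)):ℕ) < n+1 then _ else 0) = 0
      rw [dif_neg (by simp)]
  left_inv π := by
    apply Subtype.ext; apply Equiv.ext; intro x
    show (if h : (x:ℕ) < n+1 then π.1 ⟨(x:ℕ), _⟩ else 0) = π.1 x
    split_ifs with h
    · exact congrArg _ (Fin.ext rfl)
    · have hx : x = Fin.last (n+1) := Fin.ext (by simp [Fin.last]; omega)
      rw [hx, π.2.2]
  right_inv w := by
    apply Subtype.ext; apply Function.Embedding.ext; intro j
    show (if h : ((⟨(j:ℕ), _⟩ : Fin (n+2)):ℕ) < n+1 then w.1 ⟨_, h⟩ else 0) = w.1 j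
    rw [dif_pos (show (j:ℕ) < n+1 from j.isLt)]



noncomputable def tail2Equiv (n : ℕ) (v : Fin (n+2)) (hv : v ≠ 0) :
    {π : Equiv.Perm (Fin (n+2)) // Avoid ⇑π ∧ π ⟨n, by omega⟩ = 0 ∧ π (Fin.last (n+1)) = v} ≃
    {w : Fin n ↪ Fin (n+2) //
      (∀ x, w x ∈ ((Finset.univ : Finset (Fin (n+2))).erase 0).erase v) ∧ Avoid ⇑w} where
  toFun π := by
    refine ⟨⟨fun j => π.1 ⟨(j:ℕ), by omega⟩, fun a b h => ?_⟩, fun j => ?_, ?_⟩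
    · have := congrArg Fin.val (π.1.injective h)
      exact Fin.ext this
    · rw [Finset.mem_erase, Finset.mem_erase]
      refine ⟨fun h => ?_, fun h => ?_, Finset.mem_univ _⟩
      · have := congrArg Fin.val (π.1.injective ((h : π.1 _ = v).trans π.2.2.2.symm))
        simp [Fin.last] at this
        omega
      · have := congrArg Fin.val (π.1.injective ((h : π.1 _ = 0).trans π.2.2.1.symm))
        simp at this
        omega
    · intro i j hj hij
      have hj' : ((⟨(j:ℕ), by omega⟩ : Fin (n+2)) : ℕ) + 1 < n + 2 := by
        show (j:ℕ) + 1 < n + 2; omega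
      exact π.2.1 ⟨(i:ℕ), by omega⟩ ⟨(j:ℕ), by omega⟩ hj' hij
  invFun w := by
    have hne : ∀ j, w.1 j ≠ 0 := fun j => (Finset.mem_erase.mp (Finset.mem_erase.mp (w.2.1 j)).2).1
    have hnv : ∀ j, w.1 j ≠ v := fun j => (Finset.mem_erase.mp (w.2.1 j)).1
    have hinj : Function.Injective
        (fun x : Fin (n+2) => if h : (x:ℕ) < n then w.1 ⟨(x:ℕ), h⟩
          else if (x:ℕ) = n then 0 else v) := by
      intro a b hab
      dsimp only at hab
      split_ifs at hab with h1 h2 h3 h3 h4 h5 h5 h6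
      · have hveq := congrArg Fin.val (w.1.injective hab)
        exact Fin.ext hveq
      · exact absurd hab (hne _)
      · exact absurd hab (hnv _)
      · exact absurd hab.symm (hne _)
      · exact Fin.ext (by omega)
      · exact absurd hab.symm hv
      · exact absurd hab.symm (hnv _)
      · exact absurd hab hv
      · exact Fin.ext (by omega)
    refine ⟨Equiv.ofBijective _ (Finite.injective_iff_bijective.mp hinj), ?_, ?_, ?_⟩
    · show Avoid (fun x : Fin (n+2) => if h : (x:ℕ) < n then w.1 ⟨(x:ℕ), h⟩
        else if (x:ℕ) = n then 0 else v)
      intro i j hj hij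
      have hij' : (i:ℕ) < (j:ℕ) := hij
      rcases Nat.lt_trichotomy ((j:ℕ)+1) n with hjn | hjn | hjn
      · have key := w.2.2 ⟨(i:ℕ), by omega⟩ ⟨(j:ℕ), by omega⟩
          (show (j:ℕ)+1 < n from hjn) hij
        simp only [dif_pos (show (i:ℕ) < n by omega), dif_pos (show (j:ℕ) < n by omega),
          dif_pos (show ((⟨(j:ℕ)+1, hj⟩ : Fin (n+2)):ℕ) < n from hjn)]
        exact key
      · -- j+1 = n : second entry is 0
        simp only [dif_pos (show (i:ℕ) < n by omega), dif_pos (show (j:ℕ) < n by omega),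
          dif_neg (show ¬ (((⟨(j:ℕ)+1, hj⟩ : Fin (n+2)):ℕ) < n) from by show ¬((j:ℕ)+1 < n); omega),
          if_pos (show ((⟨(j:ℕ)+1, hj⟩ : Fin (n+2)):ℕ) = n from hjn)]
        rw [min_eq_right (Fin.zero_le _)]
        exact Fin.pos_iff_ne_zero.mpr (hne _)
      · -- j = n (j+1 = n+1): first entry is 0
        have hjn' : (j:ℕ) = n := by omega
        have hin : (i:ℕ) < n := by omega
        simp only [dif_pos hin, dif_neg (show ¬ ((j:ℕ) < n) by omega), if_pos hjn']
        rw [min_eq_left (Fin.zero_le _)]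
        exact Fin.pos_iff_ne_zero.mpr (hne _)
    · show (if h : ((⟨n, _⟩ : Fin (n+2)):ℕ) < n then _ else if ((⟨n, _⟩ : Fin (n+2)):ℕ) = n then 0 else v) = 0
      rw [dif_neg (by simp)]
      exact if_pos rfl
    · show (if h : ((Fin.last (n+1)):ℕ) < n then _ else if ((Fin.last (n+1)):ℕ) = n then 0 else v) = v
      rw [dif_neg (by simp [Fin.last])]
      exact if_neg (by simp [Fin.last])
  left_inv π := by
    apply Subtype.ext; apply Equiv.ext; intro x
    show (if h : (x:ℕ) < n then π.1 ⟨(x:ℕ), _⟩ else if (x:ℕ) = n then 0 else v) = π.1 x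
    split_ifs with h h2
    · exact congrArg _ (Fin.ext rfl)
    · have hx : x = (⟨n, by omega⟩ : Fin (n+2)) := Fin.ext h2
      rw [hx, π.2.2.1]
    · have hx : x = Fin.last (n+1) := Fin.ext (by simp [Fin.last]; omega)
      rw [hx, π.2.2.2]
  right_inv w := by
    apply Subtype.ext; apply Function.Embedding.ext; intro j
    show (if h : ((⟨(j:ℕ), _⟩ : Fin (n+2)):ℕ) < n then w.1 ⟨_, h⟩ else _) = w.1 j
    rw [dif_pos (show (j:ℕ) < n from j.isLt)]


theorem invol_iff {α : Type*} (σ : Equiv.Perm α) : σ * σ = 1 ↔ ∀ x, σ (σ x) = x := by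
  rw [Equiv.ext_iff]; simp [Equiv.Perm.mul_apply]

def involCongr {α β : Type*} (e : α ≃ β) :
    {σ : Equiv.Perm α // σ * σ = 1} ≃ {σ : Equiv.Perm β // σ * σ = 1} where
  toFun σ := ⟨e.permCongr σ.1, by
    have hpt := (invol_iff _).mp σ.2
    rw [invol_iff]; intro x; simp [Equiv.permCongr_apply, hpt (e.symm x)]⟩
  invFun σ := ⟨e.symm.permCongr σ.1, by
    have hpt := (invol_iff _).mp σ.2
    rw [invol_iff]; intro x; simp [Equiv.permCongr_apply, hpt (e x)]⟩
  left_inv σ := by apply Subtype.ext; apply Equiv.ext; intro x; simp [Equiv.permCongr_apply]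
  right_inv σ := by apply Subtype.ext; apply Equiv.ext; intro x; simp [Equiv.permCongr_apply]

section Fix
variable {α : Type*} [DecidableEq α]

theorem fix_pred {σ : Equiv.Perm α} {a : α} (h1 : σ * σ = 1) (h2 : σ a = a) :
    ∀ x, x ≠ a ↔ σ x ≠ a := by
  have hpt := (invol_iff _).mp h1
  intro x
  apply not_congr
  constructor
  · rintro rfl; exact h2
  · intro h; have := hpt x; rw [h, h2] at this; exact this.symm

def fixEquiv (a : α) :
    {σ : Equiv.Perm α // σ * σ = 1 ∧ σ a = a} ≃ {σ : Equiv.Perm {x : α // x ≠ a} // σ * σ = 1} where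
  toFun σ := ⟨σ.1.subtypePerm (fun x => (fix_pred σ.2.1 σ.2.2 x).symm), by
    have hpt := (invol_iff _).mp σ.2.1
    rw [invol_iff]; rintro ⟨x, hx⟩
    apply Subtype.ext; simp [Equiv.Perm.subtypePerm_apply, hpt x]⟩
  invFun σ := ⟨Equiv.Perm.ofSubtype σ.1, by rw [← map_mul, σ.2, map_one],
    Equiv.Perm.ofSubtype_apply_of_not_mem σ.1 (by simp)⟩
  left_inv σ := by
    apply Subtype.ext
    exact Equiv.Perm.ofSubtype_subtypePerm (fun x => (fix_pred σ.2.1 σ.2.2 x).symm)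
      (fun x hx => fun hxa => hx (by rw [hxa, σ.2.2]))
  right_inv σ := by
    apply Subtype.ext; apply Equiv.ext; rintro ⟨x, hx⟩
    apply Subtype.ext
    simp [Equiv.Perm.subtypePerm_apply,
      Equiv.Perm.ofSubtype_apply_of_mem (p := fun x => x ≠ a) σ.1 hx]

theorem swap_pred {σ : Equiv.Perm α} {a b : α} (h1 : σ * σ = 1) (h2 : σ a = b) :
    ∀ x, (x ≠ a ∧ x ≠ b) ↔ (σ x ≠ a ∧ σ x ≠ b) := by
  have hpt := (invol_iff _).mp h1
  have hba : σ b = a := by rw [← h2]; exact hpt a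
  intro x
  constructor
  · rintro ⟨ha, hb⟩
    constructor
    · intro h; have := hpt x; rw [h, h2] at this; exact hb (this.symm.trans rfl ▸ this.symm)
    · intro h; have := hpt x; rw [h, hba] at this; exact ha this.symm
  · rintro ⟨ha, hb⟩
    refine ⟨fun h => hb ?_, fun h => ha ?_⟩
    · rw [h, h2]
    · rw [h, hba]

def swapEquiv (a b : α) (hab : a ≠ b) :
    {σ : Equiv.Perm α // σ * σ = 1 ∧ σ a = b} ≃
    {σ : Equiv.Perm {x : α // x ≠ a ∧ x ≠ b} // σ * σ = 1} where
  toFun σ := ⟨σ.1.subtypePerm (fun x => (swap_pred σ.2.1 σ.2.2 x).symm), by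
    have hpt := (invol_iff _).mp σ.2.1
    rw [invol_iff]; rintro ⟨x, hx⟩
    apply Subtype.ext; simp [Equiv.Perm.subtypePerm_apply, hpt x]⟩
  invFun σ := by
    have hd : Equiv.Perm.Disjoint (Equiv.swap a b) (Equiv.Perm.ofSubtype σ.1) := by
      intro x
      by_cases hx : x ≠ a ∧ x ≠ b
      · exact Or.inl (Equiv.swap_apply_of_ne_of_ne hx.1 hx.2)
      · exact Or.inr (Equiv.Perm.ofSubtype_apply_of_not_mem σ.1 hx)
    refine ⟨Equiv.swap a b * Equiv.Perm.ofSubtype σ.1, ?_, ?_⟩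
    · have hcomm := hd.commute
      calc (Equiv.swap a b * Equiv.Perm.ofSubtype σ.1) * (Equiv.swap a b * Equiv.Perm.ofSubtype σ.1)
          = Equiv.swap a b * (Equiv.Perm.ofSubtype σ.1 * Equiv.swap a b) * Equiv.Perm.ofSubtype σ.1 := by
            group
        _ = Equiv.swap a b * (Equiv.swap a b * Equiv.Perm.ofSubtype σ.1) * Equiv.Perm.ofSubtype σ.1 := by
            rw [hcomm.symm.eq]
        _ = (Equiv.swap a b * Equiv.swap a b) * (Equiv.Perm.ofSubtype σ.1 * Equiv.Perm.ofSubtype σ.1) := by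
            group
        _ = 1 := by rw [Equiv.swap_mul_self, ← map_mul, σ.2, map_one, one_mul]
    · rw [Equiv.Perm.mul_apply, Equiv.Perm.ofSubtype_apply_of_not_mem σ.1 (by simp),
        Equiv.swap_apply_left]
  left_inv σ := by
    have hpt := (invol_iff _).mp σ.2.1
    obtain ⟨σ, hσ1, hσ2⟩ := σ
    have hba : σ b = a := by rw [← hσ2]; exact hpt a
    apply Subtype.ext; apply Equiv.ext; intro x
    rw [Equiv.Perm.mul_apply]
    by_cases hx : x ≠ a ∧ x ≠ b
    · rw [Equiv.Perm.ofSubtype_apply_of_mem (p := fun x => x ≠ a ∧ x ≠ b) _ hx,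
        Equiv.Perm.subtypePerm_apply]
      exact Equiv.swap_apply_of_ne_of_ne ((swap_pred hσ1 hσ2 x).mp hx).1
        ((swap_pred hσ1 hσ2 x).mp hx).2
    · push_neg at hx
      by_cases hxa : x = a
      · rw [hxa, Equiv.Perm.ofSubtype_apply_of_not_mem _ (by simp), Equiv.swap_apply_left, hσ2]
      · have hxb : x = b := hx hxa
        rw [hxb, Equiv.Perm.ofSubtype_apply_of_not_mem _ (by simp), Equiv.swap_apply_right, hba]
  right_inv σ := by
    apply Subtype.ext; apply Equiv.ext; rintro ⟨x, hx⟩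
    apply Subtype.ext
    rw [Equiv.Perm.subtypePerm_apply]
    show (Equiv.swap a b * Equiv.Perm.ofSubtype σ.1) x = _
    rw [Equiv.Perm.mul_apply, Equiv.Perm.ofSubtype_apply_of_mem (p := fun x => x ≠ a ∧ x ≠ b) σ.1 hx]
    exact Equiv.swap_apply_of_ne_of_ne (σ.1 ⟨x, hx⟩).2.1 (σ.1 ⟨x, hx⟩).2.2

end Fix
theorem nat_card_decomp {α β : Type*} [Fintype α] [Fintype β] (P : α → Prop) (f : α → β) :
    Nat.card {x // P x} = ∑ b : β, Nat.card {x // P x ∧ f x = b} := by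
  classical
  have e : {x // P x} ≃ Σ b : β, {x // P x ∧ f x = b} :=
    ((Equiv.sigmaFiberEquiv (fun y : {x // P x} => f y.1)).symm.trans
      (Equiv.sigmaCongrRight (fun b => Equiv.subtypeSubtypeEquivSubtypeInter P (fun x => f x = b))))
  rw [Nat.card_congr e, Nat.card_eq_fintype_card, Fintype.card_sigma]
  exact Finset.sum_congr rfl (fun b _ => (Nat.card_eq_fintype_card).symm)

theorem card_ne {N : ℕ} (a : Fin N) : Fintype.card {x : Fin N // x ≠ a} = N - 1 := by
  classical
  rw [Fintype.card_subtype]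
  rw [show (Finset.univ.filter (fun x : Fin N => x ≠ a)) = Finset.univ.erase a by
    ext x; simp [Finset.mem_erase]]
  rw [Finset.card_erase_of_mem (Finset.mem_univ _)]
  simp

theorem card_ne2 {N : ℕ} (a b : Fin N) (hab : a ≠ b) :
    Fintype.card {x : Fin N // x ≠ a ∧ x ≠ b} = N - 2 := by
  classical
  rw [Fintype.card_subtype]
  rw [show (Finset.univ.filter (fun x : Fin N => x ≠ a ∧ x ≠ b))
      = (Finset.univ.erase a).erase b by
    ext x; simp [Finset.mem_erase]; tauto]
  rw [Finset.card_erase_of_mem (by simp [Finset.mem_erase, Ne.symm hab]),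
    Finset.card_erase_of_mem (Finset.mem_univ _)]
  simp; omega

noncomputable def Acnt (n : ℕ) : ℕ := Nat.card {π : Equiv.Perm (Fin n) // Avoid ⇑π}
noncomputable def Bcnt (n : ℕ) : ℕ := Nat.card {σ : Equiv.Perm (Fin n) // σ * σ = 1}

theorem Bcnt_of_card {α : Type*} [Fintype α] [DecidableEq α] {n : ℕ} (h : Fintype.card α = n) :
    Nat.card {σ : Equiv.Perm α // σ * σ = 1} = Bcnt n :=
  Nat.card_congr (involCongr (Fintype.equivFinOfCardEq h))

theorem Bcnt_rec (n : ℕ) : Bcnt (n+2) = Bcnt (n+1) + (n+1) * Bcnt n := by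
  classical
  rw [Bcnt, nat_card_decomp _ (fun σ => σ (Fin.last (n+1))),
    ← Finset.add_sum_erase _ _ (Finset.mem_univ (Fin.last (n+1)))]
  congr 1
  · rw [Nat.card_congr (fixEquiv (Fin.last (n+1)))]
    exact Bcnt_of_card (by rw [card_ne]; simp)
  · have hsum : ∀ b ∈ Finset.univ.erase (Fin.last (n+1)),
        Nat.card {σ : Equiv.Perm (Fin (n+2)) // σ * σ = 1 ∧ σ (Fin.last (n+1)) = b} = Bcnt n := by
      intro b hb
      have hb' : b ≠ Fin.last (n+1) := (Finset.mem_erase.mp hb).1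
      rw [Nat.card_congr (swapEquiv (Fin.last (n+1)) b (Ne.symm hb'))]
      exact Bcnt_of_card (by rw [card_ne2 _ _ (Ne.symm hb')]; omega)
    rw [Finset.sum_congr rfl hsum, Finset.sum_const,
      Finset.card_erase_of_mem (Finset.mem_univ _)]
    simp [Finset.card_univ, mul_comm]

theorem zero_last {n : ℕ} (π : Equiv.Perm (Fin (n+2))) (h : Avoid ⇑π) :
    π ⟨n, by omega⟩ = 0 ∨ π (Fin.last (n+1)) = 0 := by
  set p := π.symm 0 with hp
  have hπp : π p = 0 := π.apply_symm_apply 0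
  rcases Nat.lt_trichotomy (p : ℕ) n with hlt | heq | hgt
  · exfalso
    have key := h p ⟨(p:ℕ)+1, by omega⟩ (show (p:ℕ)+1+1 < n+2 by omega)
      (show (p:ℕ) < (p:ℕ)+1 by omega)
    rw [hπp] at key
    simp at key
  · left; rw [show (⟨n, by omega⟩ : Fin (n+2)) = p from Fin.ext heq.symm]; exact hπp
  · right
    have : p = Fin.last (n+1) := Fin.ext (by have := p.isLt; simp [Fin.last]; omega)
    rw [← this]; exact hπp

theorem Acnt_rec (n : ℕ) : Acnt (n+2) = Acnt (n+1) + (n+1) * Acnt n := by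
  classical
  rw [Acnt, nat_card_decomp _ (fun π => π (Fin.last (n+1))),
    ← Finset.add_sum_erase _ _ (Finset.mem_univ (0 : Fin (n+2)))]
  congr 1
  · rw [Nat.card_congr (tail1Equiv n),
      Nat.card_congr (stdEquiv ((Finset.univ : Finset (Fin (n+2))).erase 0)
        (by rw [Finset.card_erase_of_mem (Finset.mem_univ _)]; simp))]
    rfl
  · have hsum : ∀ b ∈ (Finset.univ : Finset (Fin (n+2))).erase 0,
        Nat.card {π : Equiv.Perm (Fin (n+2)) // Avoid ⇑π ∧ π (Fin.last (n+1)) = b} = Acnt n := by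
      intro b hb
      have hb' : b ≠ 0 := (Finset.mem_erase.mp hb).1
      have e1 : {π : Equiv.Perm (Fin (n+2)) // Avoid ⇑π ∧ π (Fin.last (n+1)) = b} ≃
          {π : Equiv.Perm (Fin (n+2)) // Avoid ⇑π ∧ π ⟨n, by omega⟩ = 0 ∧ π (Fin.last (n+1)) = b} :=
        Equiv.subtypeEquivRight (fun π => by
          constructor
          · rintro ⟨h1, h2⟩
            refine ⟨h1, (zero_last π h1).resolve_right (fun hl => hb' (h2 ▸ hl ▸ rfl)), h2⟩
          · rintro ⟨h1, h2, h3⟩; exact ⟨h1, h3⟩)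
      rw [Nat.card_congr e1, Nat.card_congr (tail2Equiv n b hb'),
        Nat.card_congr (stdEquiv (((Finset.univ : Finset (Fin (n+2))).erase 0).erase b)
          (by rw [Finset.card_erase_of_mem (by simp [Finset.mem_erase, hb']),
            Finset.card_erase_of_mem (Finset.mem_univ _)]; simp))]
      rfl
    rw [Finset.sum_congr rfl hsum, Finset.sum_const,
      Finset.card_erase_of_mem (Finset.mem_univ _)]
    simp [Finset.card_univ, mul_comm]

def invNum : ℕ → ℕ
  | 0 => 1
  | 1 => 1
  | (n+2) => invNum (n+1) + (n+1) * invNum n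

theorem Acnt_zero : Acnt 0 = 1 := by
  have h : ∀ π : Equiv.Perm (Fin 0), Avoid ⇑π := fun π i => i.elim0
  rw [Acnt, Nat.card_congr (Equiv.subtypeUnivEquiv h), Nat.card_eq_fintype_card]
  simp

theorem Acnt_one : Acnt 1 = 1 := by
  have h : ∀ π : Equiv.Perm (Fin 1), Avoid ⇑π := fun π i j hj => by
    have := j.isLt; omega
  rw [Acnt, Nat.card_congr (Equiv.subtypeUnivEquiv h), Nat.card_eq_fintype_card]
  simp

theorem Bcnt_zero : Bcnt 0 = 1 := by
  have h : ∀ σ : Equiv.Perm (Fin 0), σ * σ = 1 := fun σ => Subsingleton.elim _ _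
  rw [Bcnt, Nat.card_congr (Equiv.subtypeUnivEquiv h), Nat.card_eq_fintype_card]
  simp

theorem Bcnt_one : Bcnt 1 = 1 := by
  have h : ∀ σ : Equiv.Perm (Fin 1), σ * σ = 1 := fun σ => Subsingleton.elim _ _
  rw [Bcnt, Nat.card_congr (Equiv.subtypeUnivEquiv h), Nat.card_eq_fintype_card]
  simp

theorem Acnt_eq_invNum : ∀ n, Acnt n = invNum n := by
  intro n
  induction n using Nat.strong_induction_on with
  | _ n ih =>
    match n with
    | 0 => exact Acnt_zero
    | 1 => exact Acnt_one
    | (m+2) => rw [Acnt_rec, invNum, ih (m+1) (by omega), ih m (by omega)]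

theorem Bcnt_eq_invNum : ∀ n, Bcnt n = invNum n := by
  intro n
  induction n using Nat.strong_induction_on with
  | _ n ih =>
    match n with
    | 0 => exact Bcnt_zero
    | 1 => exact Bcnt_one
    | (m+2) => rw [Bcnt_rec, invNum, ih (m+1) (by omega), ih m (by omega)]

/-- For all `n ≥ 0`, the number of permutations of `[n]` avoiding both
generalized patterns `1-23` and `1-32` equals the number of involutions in `S_n`. -/
theorem count_avoiding_1_23_and_1_32_eq_involutions (n : ℕ) :
    Nat.card {π : Equiv.Perm (Fin n) // ¬ Occ123 π ∧ ¬ Occ132' π} =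
      Nat.card {σ : Equiv.Perm (Fin n) // σ * σ = 1} := by
  rw [Nat.card_congr (Equiv.subtypeEquivRight (fun π => avoid_iff π))]
  rw [show Nat.card {π : Equiv.Perm (Fin n) // Avoid ⇑π} = Acnt n from rfl,
    show Nat.card {σ : Equiv.Perm (Fin n) // σ * σ = 1} = Bcnt n from rfl,
    Acnt_eq_invNum, Bcnt_eq_invNum]
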